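/- For every S ∈ 𝒮_𝒢, one has Γ S = S Γ and Γ S Γ = Γ S. -/

import Mathlib

open Matrix Finset

abbrev PairIdx (d : ℕ) := {p : Fin d × Fin d // p.1 < p.2}

/-- Pairs `r` and `s` lie in the same block: the unordered pairs of cluster labels coincide. -/
def sameBlock {d K : ℕ} (g : Fin d → Fin K) (r s : PairIdx d) : Prop :=
  (g r.1.1 = g s.1.1 ∧ g r.1.2 = g s.1.2) ∨ (g r.1.1 = g s.1.2 ∧ g r.1.2 = g s.1.1)

instance {d K : ℕ} (g : Fin d → Fin K) : DecidableRel (sameBlock g) :=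
  fun r s => by unfold sameBlock; infer_instance

/-- The overlap type `φ̄(r,s)`: the multiset of cluster labels of the elements of
`{i_r, j_r} ∩ {i_s, j_s}`.  The empty multiset encodes the type `(0,0)`, the singleton
`{k}` encodes `(0,k)`, and the two-element multiset `{k₁,k₂}` encodes
`(min(k₁,k₂), max(k₁,k₂))`. -/
def overlap {d K : ℕ} (g : Fin d → Fin K) (r s : PairIdx d) : Multiset (Fin K) :=
  (({r.1.1, r.1.2} ∩ {s.1.1, s.1.2} : Finset (Fin d)).val.map g)

/-- The cardinality of the block containing `r`. -/
def blockCard {d K : ℕ} (g : Fin d → Fin K) (r : PairIdx d) : ℕ :=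
  (Finset.univ.filter (fun t => sameBlock g r t)).card

/-- The blockwise-averaging matrix `Γ`. -/
noncomputable def Gamma {d K : ℕ} (g : Fin d → Fin K) :
    Matrix (PairIdx d) (PairIdx d) ℝ :=
  Matrix.of fun r s => if sameBlock g r s then (1 : ℝ) / (blockCard g r) else 0

/-- Membership in the class `𝒮_𝒢`. -/
def inSG {d K : ℕ} (g : Fin d → Fin K) (S : Matrix (PairIdx d) (PairIdx d) ℝ) : Prop :=
  S.IsSymm ∧ ∀ r r' s s' : PairIdx d, sameBlock g r r' → sameBlock g s s' →
    overlap g r s = overlap g r' s' → S r s = S r' s'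

section Aux

variable {d K : ℕ} {g : Fin d → Fin K}

lemma sb_refl (g : Fin d → Fin K) (r : PairIdx d) : sameBlock g r r := Or.inl ⟨rfl, rfl⟩

lemma sb_symm {r s : PairIdx d} (h : sameBlock g r s) : sameBlock g s r := by
  unfold sameBlock at *; tauto

lemma sb_trans {r s t : PairIdx d} (h1 : sameBlock g r s) (h2 : sameBlock g s t) :
    sameBlock g r t := by
  rcases h1 with ⟨a,b⟩|⟨a,b⟩ <;> rcases h2 with ⟨c,e⟩|⟨c,e⟩
  · exact Or.inl ⟨a.trans c, b.trans e⟩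
  · exact Or.inr ⟨a.trans c, b.trans e⟩
  · exact Or.inr ⟨a.trans e, b.trans c⟩
  · exact Or.inl ⟨a.trans e, b.trans c⟩

lemma filter_sb_eq {r r' : PairIdx d} (h : sameBlock g r r') :
    Finset.univ.filter (fun t => sameBlock g r t) = Finset.univ.filter (fun t => sameBlock g r' t) := by
  ext t
  simp only [Finset.mem_filter, Finset.mem_univ, true_and]
  exact ⟨fun ht => sb_trans (sb_symm h) ht, fun ht => sb_trans h ht⟩

lemma blockCard_eq {r r' : PairIdx d} (h : sameBlock g r r') :
    blockCard g r = blockCard g r' := by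
  unfold blockCard; rw [filter_sb_eq h]

lemma blockCard_pos (g : Fin d → Fin K) (r : PairIdx d) : 0 < blockCard g r :=
  Finset.card_pos.mpr ⟨r, by simp [sb_refl]⟩

/-- Finset of elements of a pair. -/
def pf (t : PairIdx d) : Finset (Fin d) := {t.1.1, t.1.2}

lemma overlap_def (g : Fin d → Fin K) (r s : PairIdx d) :
    overlap g r s = ((pf r ∩ pf s).val.map g) := rfl

lemma pair_ext {t u : PairIdx d} (h : pf t = pf u) : t = u := by
  rcases t with ⟨⟨a,b⟩,hab⟩; rcases u with ⟨⟨c,e⟩,hce⟩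
  simp only [pf] at h
  have ha : a = c ∨ a = e := by
    have : a ∈ ({c, e} : Finset (Fin d)) := h ▸ (by simp)
    simpa using this
  have hb : b = c ∨ b = e := by
    have : b ∈ ({c, e} : Finset (Fin d)) := h ▸ (by simp)
    simpa using this
  have hc : c = a ∨ c = b := by
    have : c ∈ ({a, b} : Finset (Fin d)) := h ▸ (by simp)
    simpa using this
  have h1 : (a:ℕ) = c ∨ (a:ℕ) = e := by rcases ha with h|h <;> simp [h]
  have h2 : (b:ℕ) = c ∨ (b:ℕ) = e := by rcases hb with h|h <;> simp [h]
  have h3 : (c:ℕ) = a ∨ (c:ℕ) = b := by rcases hc with h|h <;> simp [h]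
  have h4 : (a:ℕ) < b := hab
  have h5 : (c:ℕ) < e := hce
  simp only [Subtype.mk.injEq, Prod.mk.injEq]
  exact ⟨Fin.ext (by omega), Fin.ext (by omega)⟩

/-- Action of a permutation on pairs. -/
def act (σ : Equiv.Perm (Fin d)) (t : PairIdx d) : PairIdx d :=
  if h : σ t.1.1 < σ t.1.2 then ⟨(σ t.1.1, σ t.1.2), h⟩
  else ⟨(σ t.1.2, σ t.1.1), lt_of_le_of_ne (not_lt.mp h)
    (fun he => absurd (σ.injective he) (ne_of_gt t.2))⟩

lemma pf_act (σ : Equiv.Perm (Fin d)) (t : PairIdx d) :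
    pf (act σ t) = (pf t).image σ := by
  unfold act pf
  split_ifs <;> simp [Finset.image_insert, Finset.pair_comm]

lemma act_act_inv (σ : Equiv.Perm (Fin d)) (t : PairIdx d) : act σ⁻¹ (act σ t) = t := by
  apply pair_ext
  rw [pf_act, pf_act, Finset.image_image]
  ext x; simp

lemma act_inv_act (σ : Equiv.Perm (Fin d)) (t : PairIdx d) : act σ (act σ⁻¹ t) = t := by
  have := act_act_inv σ⁻¹ t
  simpa using this

lemma sameBlock_act {σ : Equiv.Perm (Fin d)} (hσ : ∀ i, g (σ i) = g i) (t : PairIdx d) :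
    sameBlock g (act σ t) t := by
  unfold act
  split_ifs
  · exact Or.inl ⟨hσ _, hσ _⟩
  · exact Or.inr ⟨hσ _, hσ _⟩

lemma overlap_act {σ : Equiv.Perm (Fin d)} (hσ : ∀ i, g (σ i) = g i) (r s : PairIdx d) :
    overlap g (act σ r) (act σ s) = overlap g r s := by
  rw [overlap_def, overlap_def, pf_act, pf_act,
    ← Finset.image_inter _ _ σ.injective,
    Finset.image_val_of_injOn (σ.injective.injOn), Multiset.map_map]
  exact Multiset.map_congr rfl (fun x _ => hσ x)

end Aux

section Exists
variable {d K : ℕ} {g : Fin d → Fin K}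

lemma g_swap {a b : Fin d} (hab : g a = g b) (x : Fin d) : g (Equiv.swap a b x) = g x := by
  rcases eq_or_ne x a with rfl|hxa
  · rw [Equiv.swap_apply_left]; exact hab.symm
  rcases eq_or_ne x b with rfl|hxb
  · rw [Equiv.swap_apply_right]; exact hab
  · rw [Equiv.swap_apply_of_ne_of_ne hxa hxb]

lemma exists_perm {s s' : PairIdx d} (h : sameBlock g s s') :
    ∃ σ : Equiv.Perm (Fin d), (∀ x, g (σ x) = g x) ∧ act σ s = s' := by
  obtain ⟨⟨i, j⟩, hij⟩ := s
  obtain ⟨⟨i', j'⟩, hij'⟩ := s'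
  simp only [sameBlock] at h
  have hij0 : i < j := hij
  have hij0' : i' < j' := hij'
  suffices h' : ∃ σ : Equiv.Perm (Fin d), (∀ x, g (σ x) = g x) ∧
      ({σ i, σ j} : Finset (Fin d)) = {i', j'} by
    obtain ⟨σ, h1, h2⟩ := h'
    refine ⟨σ, h1, pair_ext ?_⟩
    rw [pf_act]
    simpa [pf, Finset.image_insert] using h2
  have hne : i ≠ j := ne_of_lt hij0
  have hne' : i' ≠ j' := ne_of_lt hij0'
  by_cases h1 : i = i'
  · subst h1
    by_cases h2 : j = j'
    · subst h2; exact ⟨1, by simp, by simp⟩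
    · have hgj : g j = g j' := by rcases h with ⟨a,b⟩|⟨a,b⟩ <;> simp_all
      have hij' : i ≠ j' := ne_of_lt hij0'
      refine ⟨Equiv.swap j j', g_swap hgj, ?_⟩
      rw [Equiv.swap_apply_of_ne_of_ne hne hij', Equiv.swap_apply_left]
  · by_cases h2 : j = j'
    · subst h2
      have hgi : g i = g i' := by rcases h with ⟨a,b⟩|⟨a,b⟩ <;> simp_all
      have hji' : j ≠ i' := (ne_of_lt hij0').symm
      refine ⟨Equiv.swap i i', g_swap hgi, ?_⟩
      rw [Equiv.swap_apply_left, Equiv.swap_apply_of_ne_of_ne (ne_of_gt hij0) hji']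
    · by_cases h3 : i = j'
      · subst h3
        have hii' : i' < i := hij0'
        have hgj : g j = g i' := by rcases h with ⟨a,b⟩|⟨a,b⟩ <;> simp_all
        have hji' : j ≠ i' := ne_of_gt (hii'.trans hij0)
        refine ⟨Equiv.swap j i', g_swap hgj, ?_⟩
        rw [Equiv.swap_apply_of_ne_of_ne hne (ne_of_gt hii'), Equiv.swap_apply_left,
          Finset.pair_comm]
      · by_cases h4 : j = i'
        · subst h4
          have hgi : g i = g j' := by rcases h with ⟨a,b⟩|⟨a,b⟩ <;> simp_all
          have hjj' : j ≠ j' := ne_of_lt hij0'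
          refine ⟨Equiv.swap i j', g_swap hgi, ?_⟩
          rw [Equiv.swap_apply_left, Equiv.swap_apply_of_ne_of_ne (ne_of_gt hij0) hjj',
            Finset.pair_comm]
        · -- all four distinct
          by_cases h5 : j = j'
          · exact absurd h5 (by
              intro h5'; subst h5'
              have hgi : g i = g i' := by rcases h with ⟨a,b⟩|⟨a,b⟩ <;> simp_all
              exact h2 rfl)
          · rcases h with ⟨ha,hb⟩|⟨ha,hb⟩
            · refine ⟨(Equiv.swap j j').trans (Equiv.swap i i'),
                fun x => by rw [Equiv.trans_apply, g_swap ha, g_swap hb], ?_⟩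
              rw [Equiv.trans_apply, Equiv.trans_apply,
                Equiv.swap_apply_of_ne_of_ne hne h3, Equiv.swap_apply_left,
                Equiv.swap_apply_left,
                Equiv.swap_apply_of_ne_of_ne (Ne.symm h3) (Ne.symm hne')]
            · refine ⟨(Equiv.swap j i').trans (Equiv.swap i j'),
                fun x => by rw [Equiv.trans_apply, g_swap ha, g_swap hb], ?_⟩
              rw [Equiv.trans_apply, Equiv.trans_apply,
                Equiv.swap_apply_of_ne_of_ne hne h1, Equiv.swap_apply_left,
                Equiv.swap_apply_left,
                Equiv.swap_apply_of_ne_of_ne (Ne.symm h1) hne', Finset.pair_comm]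
end Exists

section Main
variable {d K : ℕ} {g : Fin d → Fin K} {S : Matrix (PairIdx d) (PairIdx d) ℝ}

/-- Block row-sum. -/
noncomputable def Fb (g : Fin d → Fin K) (S : Matrix (PairIdx d) (PairIdx d) ℝ)
    (r s : PairIdx d) : ℝ :=
  ∑ t ∈ Finset.univ.filter (fun t => sameBlock g r t), S t s

lemma Fb_congr (hS : inSG g S) {s s' : PairIdx d} (hss' : sameBlock g s s') (r : PairIdx d) :
    Fb g S r s = Fb g S r s' := by
  obtain ⟨σ, hσ, hacts⟩ := exists_perm hss'
  have hσ' : ∀ x, g (σ⁻¹ x) = g x := fun x => by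
    have := hσ (σ⁻¹ x); rw [← Equiv.Perm.mul_apply, mul_inv_cancel, Equiv.Perm.one_apply] at this; exact this.symm
  unfold Fb
  refine Finset.sum_nbij' (fun t => act σ t) (fun t => act σ⁻¹ t) ?_ ?_ ?_ ?_ ?_
  · intro a ha
    simp only [Finset.mem_filter, Finset.mem_univ, true_and] at *
    exact sb_trans ha (sb_symm (sameBlock_act hσ a))
  · intro a ha
    simp only [Finset.mem_filter, Finset.mem_univ, true_and] at *
    exact sb_trans ha (sb_symm (sameBlock_act hσ' a))
  · intro a _; exact act_act_inv σ a
  · intro a _; exact act_inv_act σ a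
  · intro a _
    rw [← hacts]
    exact hS.2 a (act σ a) s (act σ s) (sb_symm (sameBlock_act hσ a))
      (sb_symm (sameBlock_act hσ s)) (overlap_act hσ a s).symm

lemma GammaS_apply (r s : PairIdx d) :
    (Gamma g * S) r s = (blockCard g r : ℝ)⁻¹ * Fb g S r s := by
  rw [Matrix.mul_apply]
  simp only [Gamma, Matrix.of_apply, ite_mul, zero_mul]
  rw [← Finset.sum_filter, Fb, Finset.mul_sum]
  exact Finset.sum_congr rfl (fun t _ => by rw [one_div])

lemma SGamma_apply (hS : inSG g S) (r s : PairIdx d) :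
    (S * Gamma g) r s = (blockCard g s : ℝ)⁻¹ * Fb g S s r := by
  rw [Matrix.mul_apply]
  simp only [Gamma, Matrix.of_apply, mul_ite, mul_zero]
  rw [← Finset.sum_filter]
  have hfe : Finset.univ.filter (fun t => sameBlock g t s)
      = Finset.univ.filter (fun t => sameBlock g s t) := by
    ext t; simp only [Finset.mem_filter, Finset.mem_univ, true_and]
    exact ⟨sb_symm, sb_symm⟩
  rw [hfe, Fb, Finset.mul_sum]
  refine Finset.sum_congr rfl (fun t ht => ?_)
  simp only [Finset.mem_filter, Finset.mem_univ, true_and] at ht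
  rw [blockCard_eq (sb_symm ht), hS.1.apply t r, one_div]
  ring

lemma key (hS : inSG g S) (r s : PairIdx d) :
    (blockCard g s : ℝ) * Fb g S r s = (blockCard g r : ℝ) * Fb g S s r := by
  have e1 : (blockCard g s : ℝ) * Fb g S r s
      = ∑ u ∈ Finset.univ.filter (fun u => sameBlock g s u),
          ∑ t ∈ Finset.univ.filter (fun t => sameBlock g r t), S t u := by
    rw [show (blockCard g s : ℝ) * Fb g S r s
        = ∑ _u ∈ Finset.univ.filter (fun u => sameBlock g s u), Fb g S r s by
      rw [Finset.sum_const, nsmul_eq_mul, blockCard]]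
    exact Finset.sum_congr rfl (fun u hu =>
      Fb_congr hS (Finset.mem_filter.mp hu).2 r)
  have e2 : (blockCard g r : ℝ) * Fb g S s r
      = ∑ t ∈ Finset.univ.filter (fun t => sameBlock g r t),
          ∑ u ∈ Finset.univ.filter (fun u => sameBlock g s u), S u t := by
    rw [show (blockCard g r : ℝ) * Fb g S s r
        = ∑ _t ∈ Finset.univ.filter (fun t => sameBlock g r t), Fb g S s r by
      rw [Finset.sum_const, nsmul_eq_mul, blockCard]]
    exact Finset.sum_congr rfl (fun t ht =>
      Fb_congr hS (Finset.mem_filter.mp ht).2 s)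
  rw [e1, e2, Finset.sum_comm]
  exact Finset.sum_congr rfl (fun t _ => Finset.sum_congr rfl (fun u _ => hS.1.apply u t))

end Main

/-- For every `S ∈ 𝒮_𝒢`, `Γ S = S Γ` and `Γ S Γ = Γ S`. -/
theorem statement_13 {d K : ℕ} (hd : 2 ≤ d) (hK : 1 ≤ K)
    (g : Fin d → Fin K) (hg : Function.Surjective g)
    (S : Matrix (PairIdx d) (PairIdx d) ℝ) (hS : inSG g S) :
    Gamma g * S = S * Gamma g ∧ Gamma g * S * Gamma g = Gamma g * S := by
  have hcomm : Gamma g * S = S * Gamma g := by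
    ext r s
    rw [GammaS_apply, SGamma_apply hS]
    have hr : (blockCard g r : ℝ) ≠ 0 := Nat.cast_ne_zero.mpr (blockCard_pos g r).ne'
    have hs : (blockCard g s : ℝ) ≠ 0 := Nat.cast_ne_zero.mpr (blockCard_pos g s).ne'
    field_simp
    linear_combination key hS r s
  refine ⟨hcomm, ?_⟩
  ext r s
  rw [Matrix.mul_apply]
  conv_rhs => rw [GammaS_apply]
  have hptw : ∀ t : PairIdx d, (Gamma g * S) r t * Gamma g t s
      = if sameBlock g s t then (Gamma g * S) r t * (1 / (blockCard g s : ℝ)) else 0 := by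
    intro t
    by_cases h : sameBlock g s t
    · rw [if_pos h, show Gamma g t s = if sameBlock g t s then 1/(blockCard g t : ℝ) else 0
        from rfl, if_pos (sb_symm h), blockCard_eq (sb_symm h)]
    · rw [if_neg h, show Gamma g t s = if sameBlock g t s then 1/(blockCard g t : ℝ) else 0
        from rfl, if_neg (fun h' => h (sb_symm h')), mul_zero]
  rw [Finset.sum_congr rfl (fun t _ => hptw t), ← Finset.sum_filter]
  have hterm : ∀ t ∈ Finset.univ.filter (fun t => sameBlock g s t),
      (Gamma g * S) r t * (1 / (blockCard g s : ℝ))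
        = (blockCard g r : ℝ)⁻¹ * Fb g S r s * (1 / (blockCard g s : ℝ)) := by
    intro t ht
    simp only [Finset.mem_filter, Finset.mem_univ, true_and] at ht
    rw [GammaS_apply, Fb_congr hS (sb_symm ht) r]
  rw [Finset.sum_congr rfl hterm, Finset.sum_const, nsmul_eq_mul]
  have hs : (blockCard g s : ℝ) ≠ 0 := Nat.cast_ne_zero.mpr (blockCard_pos g s).ne'
  rw [show (Finset.univ.filter (fun t => sameBlock g s t)).card = blockCard g s from rfl]
  rw [one_div, show ((blockCard g s : ℝ)) * ((blockCard g r : ℝ)⁻¹ * Fb g S r s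
      * ((blockCard g s : ℝ))⁻¹)
      = ((blockCard g r : ℝ)⁻¹ * Fb g S r s) * ((blockCard g s : ℝ) * ((blockCard g s : ℝ))⁻¹)
      from by ring, mul_inv_cancel₀ hs, mul_one]
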